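/- Let d be a natural number and let P, Q ∈ ℂ[z] be polynomials with deg P ≤ d and deg Q ≤ d, with coefficient sequences a_j = coeff(P, j) and b_j = coeff(Q, j). Then |P(z)|² + |Q(z)|² = 1 for all z ∈ ℂ with |z| = 1 if and only if for every natural number k, ∑_{j=0}^{d} ( a_j · conj(a_{j+k}) + b_j · conj(b_{j+k}) ) equals 1 when k = 0 and equals 0 when k ≥ 1. -/

import Mathlib

open Finset

open Polynomial in
private lemma gqsp_aux_add (d k : ℕ) (P : Polynomial ℂ) (hP : P.natDegree ≤ d) :
    (P * reflect d (P.map (starRingEnd ℂ))).coeff (d + k) =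
      (starRingEnd ℂ) (∑ j ∈ Finset.range (d + 1),
        P.coeff j * (starRingEnd ℂ) (P.coeff (j + k))) := by
  have hPc : (P.map (starRingEnd ℂ)).natDegree ≤ d := natDegree_map_le.trans hP
  rw [Polynomial.coeff_mul, Finset.Nat.sum_antidiagonal_eq_sum_range_succ_mk]
  dsimp only
  rw [show (d + k).succ = k + (d + 1) by omega, Finset.sum_range_add]
  have h2 : ∑ i ∈ Finset.range k,
      P.coeff i * (reflect d (P.map (starRingEnd ℂ))).coeff (d + k - i) = 0 := by
    refine Finset.sum_eq_zero fun i hi => ?_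
    rw [Finset.mem_range] at hi
    rw [Polynomial.coeff_reflect, Polynomial.revAt_eq_self_of_lt (by omega),
      Polynomial.coeff_eq_zero_of_natDegree_lt (lt_of_le_of_lt hPc (by omega)), mul_zero]
  rw [h2, zero_add, map_sum]
  refine Finset.sum_congr rfl fun j hj => ?_
  rw [Finset.mem_range] at hj
  have h3 : d + k - (k + j) = d - j := by omega
  rw [h3, Polynomial.coeff_reflect, Polynomial.revAt_le (Nat.sub_le d j),
    Polynomial.coeff_map]
  have h4 : d - (d - j) = j := by omega
  rw [h4, map_mul, Complex.conj_conj, mul_comm, Nat.add_comm k j]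

open Polynomial in
private lemma gqsp_aux_sub (d k : ℕ) (hk : k ≤ d) (P : Polynomial ℂ) (hP : P.natDegree ≤ d) :
    (P * reflect d (P.map (starRingEnd ℂ))).coeff (d - k) =
      ∑ j ∈ Finset.range (d + 1), P.coeff j * (starRingEnd ℂ) (P.coeff (j + k)) := by
  rw [Polynomial.coeff_mul, Finset.Nat.sum_antidiagonal_eq_sum_range_succ_mk]
  have hsum : ∑ j ∈ Finset.range (d + 1), P.coeff j * (starRingEnd ℂ) (P.coeff (j + k))
      = ∑ j ∈ Finset.range (d - k + 1), P.coeff j * (starRingEnd ℂ) (P.coeff (j + k)) := by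
    refine (Finset.sum_subset (Finset.range_subset_range.mpr (by omega)) fun j hj hj' => ?_).symm
    rw [Finset.mem_range] at hj hj'
    rw [Polynomial.coeff_eq_zero_of_natDegree_lt (show P.natDegree < j + k by omega),
      map_zero, mul_zero]
  rw [hsum]
  refine Finset.sum_congr rfl fun i hi => ?_
  rw [Finset.mem_range] at hi
  rw [Polynomial.coeff_reflect, Polynomial.revAt_le (by omega : d - k - i ≤ d),
    Polynomial.coeff_map]
  have h : d - (d - k - i) = i + k := by omega
  rw [h]

/-- Fourier-coefficient characterization of the GQSP normalization condition:
`|P(z)|² + |Q(z)|² = 1` on the unit circle iff the autocorrelations of the coefficient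
sequences satisfy `∑_j (a_j conj(a_{j+k}) + b_j conj(b_{j+k})) = δ_{k,0}`. -/
theorem gqsp_normalization_iff_autocorrelation (d : ℕ) (P Q : Polynomial ℂ)
    (hP : P.natDegree ≤ d) (hQ : Q.natDegree ≤ d) :
    (∀ z : ℂ, ‖z‖ = 1 → ‖P.eval z‖ ^ 2 + ‖Q.eval z‖ ^ 2 = 1) ↔
      ∀ k : ℕ,
        (∑ j ∈ Finset.range (d + 1),
            (P.coeff j * (starRingEnd ℂ) (P.coeff (j + k)) +
              Q.coeff j * (starRingEnd ℂ) (Q.coeff (j + k)))) =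
          if k = 0 then 1 else 0 := by
  classical
  set F : Polynomial ℂ :=
    P * Polynomial.reflect d (P.map (starRingEnd ℂ)) +
      Q * Polynomial.reflect d (Q.map (starRingEnd ℂ)) with hFdef
  have hadd : ∀ k : ℕ, F.coeff (d + k) =
      (starRingEnd ℂ) (∑ j ∈ Finset.range (d + 1),
        (P.coeff j * (starRingEnd ℂ) (P.coeff (j + k)) +
          Q.coeff j * (starRingEnd ℂ) (Q.coeff (j + k)))) := by
    intro k
    rw [hFdef, Polynomial.coeff_add, gqsp_aux_add d k P hP, gqsp_aux_add d k Q hQ,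
      ← map_add, Finset.sum_add_distrib]
  have hsub : ∀ k : ℕ, k ≤ d → F.coeff (d - k) =
      ∑ j ∈ Finset.range (d + 1),
        (P.coeff j * (starRingEnd ℂ) (P.coeff (j + k)) +
          Q.coeff j * (starRingEnd ℂ) (Q.coeff (j + k))) := by
    intro k hk
    rw [hFdef, Polynomial.coeff_add, gqsp_aux_sub d k hk P hP, gqsp_aux_sub d k hk Q hQ,
      Finset.sum_add_distrib]
  have heval : ∀ z : ℂ, ‖z‖ = 1 →
      F.eval z = z ^ d * ((‖P.eval z‖ ^ 2 + ‖Q.eval z‖ ^ 2 : ℝ) : ℂ) := by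
    intro z hz
    have hz0 : z ≠ 0 := by
      intro h; rw [h] at hz; simp at hz
    have hzinv : z⁻¹ ≠ 0 := inv_ne_zero hz0
    haveI : Invertible z⁻¹ := invertibleOfNonzero hzinv
    have hrefl : ∀ R : Polynomial ℂ, R.natDegree ≤ d →
        (Polynomial.reflect d (R.map (starRingEnd ℂ))).eval z =
          z ^ d * (starRingEnd ℂ) (R.eval z) := by
      intro R hR
      have hRc : (R.map (starRingEnd ℂ)).natDegree ≤ d :=
        Polynomial.natDegree_map_le.trans hR
      have key := Polynomial.eval₂_reflect_mul_pow (RingHom.id ℂ) z⁻¹ d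
        (R.map (starRingEnd ℂ)) hRc
      have hinv : (⅟(z⁻¹) : ℂ) = z := by rw [invOf_eq_inv, inv_inv]
      rw [hinv] at key
      simp only [Polynomial.eval₂_eq_eval_map, Polynomial.map_id] at key
      have e3 : (R.map (starRingEnd ℂ)).eval z⁻¹ = (starRingEnd ℂ) (R.eval z) := by
        rw [Complex.inv_eq_conj hz, Polynomial.eval_map, Polynomial.eval₂_at_apply]
      rw [e3] at key
      have hzd : (z : ℂ) ^ d ≠ 0 := pow_ne_zero d hz0
      have hzid : (z⁻¹ : ℂ) ^ d = (z ^ d)⁻¹ := by rw [inv_pow]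
      rw [hzid] at key
      field_simp at key
      rw [key]
    have hmc : ∀ w : ℂ, (starRingEnd ℂ) w * w = ((‖w‖ : ℝ) : ℂ) ^ 2 := by
      intro w
      rw [mul_comm, Complex.mul_conj, Complex.normSq_eq_norm_sq]
      push_cast
      ring
    rw [hFdef, Polynomial.eval_add, Polynomial.eval_mul, Polynomial.eval_mul,
      hrefl P hP, hrefl Q hQ]
    push_cast
    linear_combination z ^ d * hmc (P.eval z) + z ^ d * hmc (Q.eval z)
  have hcirc : Set.Infinite {z : ℂ | ‖z‖ = 1} := by
    have hden : ∀ n : ℕ, (1 - (n : ℂ) * Complex.I) ≠ 0 := by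
      intro n h
      have := congrArg Complex.re h
      simp at this
    refine Set.infinite_of_injective_forall_mem
      (f := fun n : ℕ => (1 + (n : ℂ) * Complex.I) / (1 - (n : ℂ) * Complex.I)) ?_ ?_
    · intro m n h
      have h' := (div_eq_div_iff (hden m) (hden n)).mp h
      have : (m : ℂ) = n := by
        linear_combination (-Complex.I / 2) * h' + ((m : ℂ) - n) * Complex.I_mul_I
      exact_mod_cast this
    · intro n
      have hnum : ‖(1 + (n : ℂ) * Complex.I)‖ = ‖(1 - (n : ℂ) * Complex.I)‖ := by
        have h : (1 - (n : ℂ) * Complex.I) = (starRingEnd ℂ) (1 + (n : ℂ) * Complex.I) := by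
          rw [map_add, map_mul, Complex.conj_I]
          simp
          ring
        rw [h, RCLike.norm_conj]
      show ‖_‖ = 1
      rw [norm_div, hnum, div_self (norm_ne_zero_iff.mpr (hden n))]
  have hmain : (∀ z : ℂ, ‖z‖ = 1 → ‖P.eval z‖ ^ 2 + ‖Q.eval z‖ ^ 2 = 1) ↔
      F = Polynomial.X ^ d := by
    constructor
    · intro h
      have hroot : {z : ℂ | ‖z‖ = 1} ⊆ {z : ℂ | (F - Polynomial.X ^ d).IsRoot z} := by
        intro z hz
        simp only [Set.mem_setOf_eq, Polynomial.IsRoot, Polynomial.eval_sub,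
          Polynomial.eval_pow, Polynomial.eval_X]
        rw [heval z hz, h z hz]
        simp
      have hzero : F - Polynomial.X ^ d = 0 :=
        Polynomial.eq_zero_of_infinite_isRoot _ (hcirc.mono hroot)
      exact sub_eq_zero.mp hzero
    · intro h z hz
      have hev := heval z hz
      rw [h] at hev
      simp only [Polynomial.eval_pow, Polynomial.eval_X] at hev
      have hz0 : z ≠ 0 := by intro hh; rw [hh] at hz; simp at hz
      have hzd : z ^ d ≠ 0 := pow_ne_zero d hz0
      have h1 : ((‖P.eval z‖ ^ 2 + ‖Q.eval z‖ ^ 2 : ℝ) : ℂ) = 1 :=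
        mul_left_cancel₀ hzd (by rw [mul_one, ← hev])
      exact_mod_cast h1
  rw [hmain]
  constructor
  · intro hF k
    have h1 : (starRingEnd ℂ) (∑ j ∈ Finset.range (d + 1),
        (P.coeff j * (starRingEnd ℂ) (P.coeff (j + k)) +
          Q.coeff j * (starRingEnd ℂ) (Q.coeff (j + k)))) =
        if d + k = d then 1 else 0 := by
      rw [← hadd k, hF, Polynomial.coeff_X_pow]
    have h2 := congrArg (starRingEnd ℂ) h1
    rw [Complex.conj_conj] at h2
    rw [h2]
    by_cases hk : k = 0
    · subst hk; simp
    · rw [if_neg (by omega : ¬ d + k = d), map_zero, if_neg hk]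
  · intro hc
    ext n
    rw [Polynomial.coeff_X_pow]
    rcases le_or_gt n d with hn | hn
    · have hk : d - (d - n) = n := by omega
      have hs := hsub (d - n) (by omega)
      rw [hk] at hs
      rw [hs, hc (d - n)]
      by_cases h0 : n = d
      · subst h0; simp
      · rw [if_neg (by omega : ¬ d - n = 0), if_neg h0]
    · have hk : d + (n - d) = n := by omega
      have ha := hadd (n - d)
      rw [hk] at ha
      rw [ha, hc (n - d), if_neg (by omega : ¬ n - d = 0), map_zero,
        if_neg (by omega : ¬ n = d)]
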